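/- Let R be a commutative ring, M = R^n, f ∈ M, and I an ideal of R. If f^(2t) := (fⱼ^(2tⱼ)) satisfies fⱼ^(2tⱼ) + Σᵢ sᵢⱼ² ∈ I for each j (some tⱼ ∈ ℕ, sᵢⱼ ∈ R), then fⱼ^(tⱼ)·f belongs to the real radical of the submodule I·f for every j. Consequently, for t large enough, (Σⱼ R fⱼ)ᵗ · f ⊆ rr(I·f). -/

import Mathlib

open TensorProduct

/-- The submodule `M ⊗ N + N ⊗ M` of `M ⊗[R] M` (for `M = R^n`), where `N` is
given by a subset `S` of `M`: it is spanned by pure tensors with one factor in `S`. -/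
def tensMN {R : Type*} [CommRing R] {n : ℕ} (S : Set (Fin n → R)) :
    Submodule R ((Fin n → R) ⊗[R] (Fin n → R)) :=
  Submodule.span R
    ({x | ∃ a : Fin n → R, ∃ b ∈ S, x = a ⊗ₜ[R] b} ∪
     {x | ∃ b ∈ S, ∃ a : Fin n → R, x = b ⊗ₜ[R] a})

/-- A submodule `N` of `M = R^n` is *real* if `∑ mᵢ ⊗ mᵢ ∈ M ⊗ N + N ⊗ M` implies
all `mᵢ ∈ N`. -/
def IsRealSubmodule {R : Type*} [CommRing R] {n : ℕ} (N : Submodule R (Fin n → R)) : Prop :=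
  ∀ (K : ℕ) (m : Fin K → (Fin n → R)),
    (∑ i, m i ⊗ₜ[R] m i) ∈ tensMN (N : Set (Fin n → R)) → ∀ i, m i ∈ N

/-- The real radical of a submodule of `R^n`: the smallest real submodule containing it. -/
noncomputable def realRadicalSub {R : Type*} [CommRing R] {n : ℕ}
    (N : Submodule R (Fin n → R)) : Submodule R (Fin n → R) :=
  sInf {P | IsRealSubmodule P ∧ N ≤ P}

/-- The auxiliary radical `α(S)` of a subset of `R^n`. -/
def auxRad {R : Type*} [CommRing R] {n : ℕ} (S : Set (Fin n → R)) : Set (Fin n → R) :=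
  {f | ∃ (L : ℕ) (s : Fin L → (Fin n → R)),
    f ⊗ₜ[R] f + ∑ i, s i ⊗ₜ[R] s i ∈ tensMN S}
/-- If `fⱼ^(2tⱼ) + Σᵢ sᵢⱼ² ∈ I` for each `j`, then `fⱼ^(tⱼ)·f ∈ rr(I·f)` for every `j`;
consequently, for `t` large enough, `(Σⱼ R fⱼ)ᵗ · f ⊆ rr(I·f)`. -/
theorem stmt10 {R : Type*} [CommRing R] {n : ℕ} (f : Fin n → R) (I : Ideal R)
    (t : Fin n → ℕ) (L : ℕ) (s : Fin n → Fin L → R)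
    (hI : ∀ j, f j ^ (2 * t j) + ∑ i, s j i ^ 2 ∈ I) :
    (∀ j, (f j ^ t j) • f ∈ realRadicalSub
        (Submodule.map (LinearMap.toSpanSingleton R (Fin n → R) f) I)) ∧
    ∃ T : ℕ, ∀ t' ≥ T, ∀ a ∈ (Ideal.span (Set.range f)) ^ t',
      a • f ∈ realRadicalSub
        (Submodule.map (LinearMap.toSpanSingleton R (Fin n → R) f) I) := by
  set N := Submodule.map (LinearMap.toSpanSingleton R (Fin n → R) f) I with hN
  have part1 : ∀ j, (f j ^ t j) • f ∈ realRadicalSub N := by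
    intro j
    rw [realRadicalSub, Submodule.mem_sInf]
    rintro P ⟨hreal, hle⟩
    set a : R := f j ^ (2 * t j) + ∑ i, s j i ^ 2 with ha
    have haP : a • f ∈ P := hle ⟨a, hI j, rfl⟩
    set m : Fin (L + 1) → (Fin n → R) :=
      Fin.cons ((f j ^ t j) • f) (fun i => s j i • f) with hm
    have key : (∑ i, m i ⊗ₜ[R] m i) = a • (f ⊗ₜ[R] f) := by
      rw [hm, Fin.sum_univ_succ]
      simp only [Fin.cons_zero, Fin.cons_succ, TensorProduct.smul_tmul_smul, ← pow_add,
        two_mul, ha, add_smul, Finset.sum_smul, sq]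
    have hmem : (∑ i, m i ⊗ₜ[R] m i) ∈ tensMN (P : Set (Fin n → R)) := by
      rw [key, TensorProduct.smul_tmul']
      exact Submodule.subset_span (Or.inr ⟨a • f, haP, f, rfl⟩)
    simpa [hm] using hreal (L + 1) m hmem 0
  refine ⟨part1, ?_⟩
  set K : Ideal R :=
    Submodule.comap (LinearMap.toSpanSingleton R (Fin n → R) f) (realRadicalSub N) with hK
  have hrad : Ideal.span (Set.range f) ≤ K.radical := by
    rw [Ideal.span_le]
    rintro _ ⟨j, rfl⟩
    exact ⟨t j, part1 j⟩
  have hfg : (Ideal.span (Set.range f)).FG :=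
    Submodule.fg_span (Set.finite_range f)
  obtain ⟨T, hT⟩ := Ideal.exists_pow_le_of_le_radical_of_fg hrad hfg
  refine ⟨T, fun t' ht' x hx => ?_⟩
  exact hT (Ideal.pow_le_pow_right ht' hx)
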